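/- Let r be odd, e ≥ 2, R = GR(2^e, 2^{er}) a Galois ring, ξ ∈ R of multiplicative order 2^r − 1, and S = G₁ ∪ (−G₁) where G₁ = ⟨ξ⟩. Then the equation x + y + z = 0 has no solution with x, y, z ∈ S. Equivalently, the Cayley graph Cay(R⁺, S) is triangle-free. -/

import Mathlib

private lemma pow_one_add_two_mul {R : Type} [CommRing R] (m : ℕ) (z : R) :
    ∃ y : R, (1 + 2*z)^(2^m) = 1 + 2^(m+1)*y := by
  induction m with
  | zero => exact ⟨z, by ring⟩
  | succ n ih =>
    obtain ⟨y, hy⟩ := ih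
    refine ⟨y + 2^n*y^2, ?_⟩
    rw [show (2:ℕ)^(n+1) = 2^n*2 from pow_succ 2 n, pow_mul, hy]
    ring

/-- For `r` odd and `e ≥ 2`, in the Galois ring `R = GR(2^e, 2^{er})` with `ξ` of
multiplicative order `2^r - 1` and `S = G₁ ∪ (-G₁)`, the equation `x + y + z = 0` has
no solution in `S`; equivalently the Cayley graph `Cay(R⁺, S)` is triangle-free. -/
theorem stmt5 (e r : ℕ) (he : 2 ≤ e) (hr : Odd r)
    (R : Type) [CommRing R] [Fintype R] [CharP R (2 ^ e)]
    (hcard : Fintype.card R = 2 ^ (e * r))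
    (hlocal : ∀ x : R, ¬ IsUnit x ↔ x ∈ Ideal.span {(2 : R)})
    (ξ : R) (hξ : orderOf ξ = 2 ^ r - 1) :
    (∀ x y z : R, (∃ k : ℕ, x = ξ ^ k ∨ x = -ξ ^ k) → (∃ k : ℕ, y = ξ ^ k ∨ y = -ξ ^ k) →
        (∃ k : ℕ, z = ξ ^ k ∨ z = -ξ ^ k) → x + y + z ≠ 0) ∧
      (SimpleGraph.fromRel fun x y : R => ∃ k : ℕ, x - y = ξ ^ k).CliqueFree 3 := by
  have hrpos : 0 < r := hr.pos
  obtain ⟨Q, hQ⟩ : ∃ Q : ℕ, 2^r = Q + 2 := by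
    have h2 : 2 ≤ 2^r := by
      calc (2:ℕ) = 2^1 := (pow_one 2).symm
      _ ≤ 2^r := Nat.pow_le_pow_right (by norm_num) hrpos
    exact ⟨2^r - 2, by omega⟩
  have hξ1 : ξ^(Q+1) = 1 := by
    have h := pow_orderOf_eq_one ξ
    rw [hξ] at h
    rwa [show 2^r - 1 = Q+1 by omega] at h
  -- basic unit facts
  have hUξ : IsUnit ξ := IsUnit.of_mul_eq_one (a := ξ) (ξ^Q) (by rw [← pow_succ']; exact hξ1)
  have hU : ∀ n : ℕ, IsUnit (ξ^n) := fun n => hUξ.pow n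
  have hnu : ∀ x : R, ¬ IsUnit x ↔ 2 ∣ x := fun x =>
    (hlocal x).trans (Ideal.mem_span_singleton)
  have hunit_dvd : ∀ x : R, IsUnit x → ¬ 2 ∣ x := fun x hx h2 => ((hnu x).mpr h2) hx
  have two_ne : (2:R) ≠ 0 := by
    intro h
    have h' : ((2:ℕ) : R) = 0 := by exact_mod_cast h
    have hd : 2^e ∣ 2 := (CharP.cast_eq_zero_iff R (2^e) 2).mp h'
    have h4 : 4 ≤ 2^e := by
      calc (4:ℕ) = 2^2 := by norm_num
      _ ≤ 2^e := Nat.pow_le_pow_right (by norm_num) he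
    have := Nat.le_of_dvd (by norm_num) hd
    omega
  have prime2 : ∀ a b : R, 2 ∣ a*b → 2 ∣ a ∨ 2 ∣ b := by
    intro a b hab
    by_cases h : 2 ∣ a
    · exact Or.inl h
    · have ha : IsUnit a := by
        by_contra h'
        exact h ((hnu a).mp h')
      obtain ⟨u, rfl⟩ := ha
      right
      have hb : (b : R) = ↑u⁻¹ * (↑u * b) := by
        rw [← mul_assoc, Units.inv_mul, one_mul]
      rw [hb]
      exact hab.mul_left _
  have ann2 : ∀ z : R, 2*z = 0 → 2 ∣ z := by
    intro z h
    by_contra h'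
    have hz : IsUnit z := by
      by_contra h''
      exact h' ((hnu z).mp h'')
    obtain ⟨u, rfl⟩ := hz
    have : (2:R) = (2*↑u) * ↑u⁻¹ := by rw [mul_assoc, Units.mul_inv, mul_one]
    rw [h, zero_mul] at this
    exact two_ne this
  have sq2 : ∀ a : R, 2 ∣ a^2 → 2 ∣ a := by
    intro a h
    rcases prime2 a a (by rwa [← sq]) with h'|h' <;> exact h'
  -- injectivity of reduction mod 2 on powers of ξ
  have mod2_inj : ∀ n : ℕ, 2 ∣ ξ^n - 1 → ξ^n = 1 := by
    intro n h
    obtain ⟨z, hz⟩ := h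
    have hx : ξ^n = 1 + 2*z := by linear_combination hz
    obtain ⟨y, hy⟩ := pow_one_add_two_mul (R := R) (e-1) z
    have he0 : (2:R)^e = 0 := by
      have := CharP.cast_eq_zero R (2^e)
      push_cast at this
      exact this
    have h2 : (ξ^n)^(2^(e-1)) = 1 := by
      rw [hx, hy, show e-1+1 = e by omega, he0]
      ring
    have hd1 : orderOf (ξ^n) ∣ 2^(e-1) := orderOf_dvd_of_pow_eq_one h2
    have hd2 : orderOf (ξ^n) ∣ Q+1 := by
      apply orderOf_dvd_of_pow_eq_one
      rw [← pow_mul, mul_comm, pow_mul, hξ1, one_pow]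
    have hQodd : Odd (Q+1) := by
      have heven : Even (2^r) := by
        rcases hr with ⟨m, rfl⟩
        exact ⟨2^(2*m), by rw [← two_mul, ← pow_succ']⟩
      obtain ⟨c, hc⟩ := heven
      exact ⟨c - 1, by omega⟩
    have hcop : Nat.Coprime (2^(e-1)) (Q+1) :=
      Nat.Coprime.pow_left _ (Nat.coprime_two_left.mpr hQodd)
    have : orderOf (ξ^n) ∣ 1 := hcop ▸ Nat.dvd_gcd hd1 hd2
    exact orderOf_eq_one_iff.mp (Nat.dvd_one.mp this)
  -- square roots inside the Teichmüller group
  have hsq : ∀ i : ℕ, (ξ^(i*2^(r-1)))^2 = ξ^i := by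
    intro i
    have h2 : (2:ℕ)^(r-1)*2 = 2^r := by
      rw [← pow_succ]
      congr 1
      omega
    have h1 : i*2^(r-1)*2 = (Q+1)*i + i := by
      calc i*2^(r-1)*2 = i*(2^(r-1)*2) := by ring
      _ = i*(Q+2) := by rw [h2, hQ]
      _ = (Q+1)*i + i := by ring
    rw [← pow_mul, h1, pow_add, pow_mul, hξ1, one_pow, one_mul]
  -- Case B: ξ^i + ξ^j = ξ^k is impossible
  have caseB : ∀ i j k : ℕ, ξ^i + ξ^j = ξ^k → False := by
    intro i j k h
    set a := i*2^(r-1) with ha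
    set b := j*2^(r-1) with hb
    set c := k*2^(r-1) with hc
    have h' : (ξ^a)^2 + (ξ^b)^2 = (ξ^c)^2 := by rw [hsq i, hsq j, hsq k]; exact h
    have h1 : 2 ∣ (ξ^a + ξ^b - ξ^c)^2 :=
      ⟨(ξ^c)^2 + ξ^a*ξ^b - ξ^a*ξ^c - ξ^b*ξ^c, by linear_combination h'⟩
    obtain ⟨d, hd⟩ := sq2 _ h1
    have h3 : 2*(ξ^a*ξ^b - 2*(d*ξ^c + d*d)) = 0 := by
      linear_combination (ξ^a + ξ^b + ξ^c + 2*d)*hd - h'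
    have h4 := ann2 _ h3
    have h5 : 2 ∣ ξ^a*ξ^b := by
      have heq : ξ^a*ξ^b = (ξ^a*ξ^b - 2*(d*ξ^c + d*d)) + 2*(d*ξ^c + d*d) := by ring
      rw [heq]
      exact dvd_add h4 ⟨_, rfl⟩
    exact hunit_dvd _ ((hU a).mul (hU b)) h5
  -- not 3 ∣ Q+1
  have h3Q : ¬ 3 ∣ Q + 1 := by
    intro h3
    obtain ⟨m, rfl⟩ := hr
    have hpow : (2:ℕ)^(2*m+1) = 4^m*2 := by
      rw [pow_succ, pow_mul]
      norm_num
    have h4 : 4^m % 3 = 1 := by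
      rw [Nat.pow_mod]
      norm_num
    rw [hpow] at hQ
    omega
  -- Case A': (ξ^a)² + (ξ^b)² + (ξ^c)² = 0 with ξ^a ≢ ξ^b (mod 2) is impossible
  have caseA' : ∀ a b c : ℕ, (ξ^a)^2 + (ξ^b)^2 + (ξ^c)^2 = 0 → ¬ 2 ∣ (ξ^a - ξ^b) → False := by
    intro a b c h hab
    have h1 : 2 ∣ (ξ^a + ξ^b + ξ^c)^2 :=
      ⟨ξ^a*ξ^b + ξ^a*ξ^c + ξ^b*ξ^c, by linear_combination h⟩
    obtain ⟨d, hd⟩ := sq2 _ h1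
    have hσ0 : 2*((ξ^a*ξ^b + ξ^a*ξ^c + ξ^b*ξ^c) - 2*(d*d)) = 0 := by
      linear_combination (ξ^a + ξ^b + ξ^c + 2*d)*hd - h
    have hσ1 := ann2 _ hσ0
    have hσ : 2 ∣ (ξ^a*ξ^b + ξ^a*ξ^c + ξ^b*ξ^c) := by
      have heq : ξ^a*ξ^b + ξ^a*ξ^c + ξ^b*ξ^c
          = ((ξ^a*ξ^b + ξ^a*ξ^c + ξ^b*ξ^c) - 2*(d*d)) + 2*(d*d) := by ring
      rw [heq]
      exact dvd_add hσ1 ⟨_, rfl⟩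
    obtain ⟨w, hw⟩ := hσ
    have h6 : (ξ^a)^3 - (ξ^b)^3 = 2*(d*((ξ^a)^2 - (ξ^b)^2) - w*(ξ^a - ξ^b)) := by
      linear_combination ((ξ^a)^2 - (ξ^b)^2)*hd - (ξ^a - ξ^b)*hw
    set v := ξ^(a + b*Q) with hv
    have htv : ξ^b * v = ξ^a := by
      rw [hv, ← pow_add, show b + (a + b*Q) = a + (Q+1)*b by ring, pow_add, pow_mul, hξ1,
        one_pow, mul_one]
    have h7 : (ξ^b)^3 * v^3 = (ξ^a)^3 := by rw [← mul_pow, htv]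
    have h9 : 2 ∣ (ξ^b)^3 * (v^3 - 1) := by
      rw [mul_sub, h7, mul_one]
      exact ⟨_, h6⟩
    rcases prime2 _ _ h9 with hcontra | h10
    · exact hunit_dvd _ ((hU b).pow 3) hcontra
    · have h11 : ξ^((a + b*Q)*3) = 1 := by
        apply mod2_inj
        rw [pow_mul]
        exact h10
      have hv3 : v^3 = 1 := by rw [hv, ← pow_mul]; exact h11
      have hvne : v ≠ 1 := by
        intro hv1
        apply hab
        rw [← htv, hv1, mul_one, sub_self]
        exact dvd_zero 2
      have hdv3 := orderOf_dvd_of_pow_eq_one hv3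
      rcases (Nat.prime_three).eq_one_or_self_of_dvd _ hdv3 with h1'|h1'
      · exact hvne (orderOf_eq_one_iff.mp h1')
      · have hdiv : orderOf v ∣ Q + 1 := by
          apply orderOf_dvd_of_pow_eq_one
          rw [hv, ← pow_mul, mul_comm, pow_mul, hξ1, one_pow]
        rw [h1'] at hdiv
        exact h3Q hdiv
  -- Case A: ξ^i + ξ^j + ξ^k = 0 is impossible
  have caseA : ∀ i j k : ℕ, ξ^i + ξ^j + ξ^k = 0 → False := by
    intro i j k h
    set a := i*2^(r-1) with ha
    set b := j*2^(r-1) with hb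
    set c := k*2^(r-1) with hc
    have h' : (ξ^a)^2 + (ξ^b)^2 + (ξ^c)^2 = 0 := by rw [hsq i, hsq j, hsq k]; exact h
    by_cases h1 : 2 ∣ (ξ^a - ξ^b)
    · by_cases h2 : 2 ∣ (ξ^a - ξ^c)
      · -- all congruent: 2 ∣ ξ^a, contradiction
        have hsum : 2 ∣ ξ^a + ξ^b + ξ^c := by
          apply sq2
          exact ⟨ξ^a*ξ^b + ξ^a*ξ^c + ξ^b*ξ^c, by linear_combination h'⟩
        have hxa : 2 ∣ ξ^a := by
          have heq : ξ^a = ((ξ^a + ξ^b + ξ^c) - (ξ^b - ξ^a)) - (ξ^c - ξ^a) - 2*ξ^a := by ring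
          rw [heq]
          exact ((hsum.sub (dvd_sub_comm.mp h1)).sub (dvd_sub_comm.mp h2)).sub
            (dvd_mul_right 2 _)
        exact hunit_dvd _ (hU a) hxa
      · exact caseA' a c b (by linear_combination h') h2
    · exact caseA' a b c h' h1
  -- first part
  have part1 : ∀ x y z : R, (∃ k : ℕ, x = ξ ^ k ∨ x = -ξ ^ k) →
      (∃ k : ℕ, y = ξ ^ k ∨ y = -ξ ^ k) →
      (∃ k : ℕ, z = ξ ^ k ∨ z = -ξ ^ k) → x + y + z ≠ 0 := by
    rintro x y z ⟨i, hi⟩ ⟨j, hj⟩ ⟨k, hk⟩ hsum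
    rcases hi with hi|hi <;> rcases hj with hj|hj <;> rcases hk with hk|hk <;>
      subst hi hj hk
    · exact caseA i j k hsum
    · exact caseB i j k (by linear_combination hsum)
    · exact caseB i k j (by linear_combination hsum)
    · exact caseB j k i (by linear_combination -hsum)
    · exact caseB j k i (by linear_combination hsum)
    · exact caseB i k j (by linear_combination -hsum)
    · exact caseB i j k (by linear_combination -hsum)
    · exact caseA i j k (by linear_combination -hsum)
  refine ⟨part1, ?_⟩
  classical
  intro t ht
  rw [SimpleGraph.is3Clique_iff] at ht
  obtain ⟨x, y, z, hxy, hxz, hyz, -⟩ := ht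
  rw [SimpleGraph.fromRel_adj] at hxy hxz hyz
  obtain ⟨-, hxy⟩ := hxy
  obtain ⟨-, hxz⟩ := hxz
  obtain ⟨-, hyz⟩ := hyz
  apply part1 (x - y) (y - z) (z - x) ?_ ?_ ?_ (by ring)
  · rcases hxy with ⟨k, hk⟩|⟨k, hk⟩
    · exact ⟨k, Or.inl hk⟩
    · exact ⟨k, Or.inr (by linear_combination -hk)⟩
  · rcases hyz with ⟨k, hk⟩|⟨k, hk⟩
    · exact ⟨k, Or.inl hk⟩
    · exact ⟨k, Or.inr (by linear_combination -hk)⟩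
  · rcases hxz with ⟨k, hk⟩|⟨k, hk⟩
    · exact ⟨k, Or.inr (by linear_combination -hk)⟩
    · exact ⟨k, Or.inl hk⟩
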